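/- arXiv:2201.11463 — 2 statements merged into one kernel-verified Lean document; each statement's English description precedes it below -/
import Mathlib

section
/- Let F : ℝ → ℝ be continuous and nondecreasing, let α ∈ (0,1), and let q* ∈ ℝ be the unique real number satisfying F(q*) = α (i.e., F(q*) = α, and F(x) = α implies x = q*). If q : [0,∞) → ℝ is differentiable and satisfies q'(t) = α − F(q(t)) for all t ≥ 0, then q(t) → q* as t → ∞. -/
open Filter

private lemma antiOn_of_deriv {h : ℝ → ℝ} {d : ℝ → ℝ}
    (hd : ∀ t, 0 ≤ t → HasDerivAt h (d t) t) (hle : ∀ t, 0 ≤ t → d t ≤ 0) :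
    AntitoneOn h (Set.Ici 0) := by
  apply antitoneOn_of_deriv_nonpos (convex_Ici 0)
  · exact fun t ht => (hd t ht).continuousAt.continuousWithinAt
  · intro t ht
    rw [interior_Ici] at ht
    exact (hd t ht.le).differentiableAt.differentiableWithinAt
  · intro t ht
    rw [interior_Ici] at ht
    rw [(hd t ht.le).deriv]
    exact hle t ht.le

private lemma aux_above (F : ℝ → ℝ) (hFm : Monotone F)
    (α qstar : ℝ) (hroot : F qstar = α) (huniq : ∀ x : ℝ, F x = α → x = qstar)
    (q : ℝ → ℝ) (hq : ∀ t : ℝ, 0 ≤ t → HasDerivAt q (α - F (q t)) t)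
    (hpos : ∀ t : ℝ, 0 ≤ t → qstar < q t) :
    Tendsto q atTop (nhds qstar) := by
  have hFgt : ∀ x, qstar < x → α < F x := by
    intro x hx
    have h1 : α ≤ F x := hroot ▸ hFm hx.le
    rcases h1.lt_or_eq with h | h
    · exact h
    · exact absurd (huniq x h.symm) hx.ne'
  have hanti : AntitoneOn q (Set.Ici 0) := by
    apply antiOn_of_deriv hq
    intro t ht
    have := hFgt (q t) (hpos t ht)
    linarith
  set f : ℝ → ℝ := fun t => q (max t 0) with hf
  have hfa : Antitone f := fun s t hst =>
    hanti (Set.mem_Ici.2 (le_max_right s 0)) (Set.mem_Ici.2 (le_max_right t 0))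
      (max_le_max hst le_rfl)
  have hbdd : BddBelow (Set.range f) :=
    ⟨qstar, by rintro _ ⟨t, rfl⟩; exact (hpos _ (le_max_right t 0)).le⟩
  have hL : Tendsto f atTop (nhds (⨅ t, f t)) := tendsto_atTop_ciInf hfa hbdd
  set L := ⨅ t, f t with hLdef
  have hqL : qstar ≤ L := le_ciInf fun t => (hpos _ (le_max_right t 0)).le
  have hLq : L = qstar := by
    by_contra hne
    have hlt : qstar < L := hqL.lt_of_ne (Ne.symm hne)
    have hε : α < F L := hFgt L hlt
    set ε := F L - α with hεdef
    have hεpos : 0 < ε := by simp only [hεdef]; linarith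
    have hqge : ∀ t, 0 ≤ t → L ≤ q t := by
      intro t ht
      have h2 := ciInf_le hbdd t
      simpa [hf, max_eq_left ht] using h2
    have hanti2 : AntitoneOn (fun t => q t + ε * t) (Set.Ici 0) := by
      apply antiOn_of_deriv (d := fun t => (α - F (q t)) + ε)
      · intro t ht
        have h := (hq t ht).add ((hasDerivAt_id t).const_mul ε)
        simp only [mul_one] at h
        exact h
      · intro t ht
        have := hFm (hqge t ht)
        simp only [hεdef]
        linarith
    obtain ⟨T, hT0, hTlt⟩ : ∃ T, 0 ≤ T ∧ q 0 - ε * T < qstar := by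
      refine ⟨max 0 ((q 0 - qstar)/ε + 1), le_max_left _ _, ?_⟩
      have h1 : (q 0 - qstar)/ε + 1 ≤ max 0 ((q 0 - qstar)/ε + 1) := le_max_right _ _
      have h2 : ε * ((q 0 - qstar)/ε + 1) ≤ ε * max 0 ((q 0 - qstar)/ε + 1) :=
        mul_le_mul_of_nonneg_left h1 hεpos.le
      have h3 : ε * ((q 0 - qstar)/ε + 1) = (q 0 - qstar) + ε := by
        field_simp
      linarith
    have h5 := hanti2 Set.self_mem_Ici (Set.mem_Ici.2 hT0) hT0
    simp only [mul_zero, add_zero] at h5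
    have h6 := hpos T hT0
    nlinarith
  rw [hLq] at hL
  apply hL.congr'
  filter_upwards [eventually_ge_atTop (0:ℝ)] with t ht
  simp [hf, max_eq_left ht]

/-- Global asymptotic stability in Lemma 1 of the paper: if `F` is continuous and
nondecreasing, `α ∈ (0,1)`, `qstar` is the unique root of `F x = α`, and
`q : [0,∞) → ℝ` solves the ODE `q'(t) = α − F (q t)`, then `q t → qstar` as `t → ∞`. -/
theorem stmt_1 (F : ℝ → ℝ) (hFc : Continuous F) (hFm : Monotone F)
    (α : ℝ) (hα : α ∈ Set.Ioo (0 : ℝ) 1)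
    (qstar : ℝ) (hroot : F qstar = α) (huniq : ∀ x : ℝ, F x = α → x = qstar)
    (q : ℝ → ℝ) (hq : ∀ t : ℝ, 0 ≤ t → HasDerivAt q (α - F (q t)) t) :
    Tendsto q atTop (nhds qstar) := by
  have hqc : ContinuousOn q (Set.Ici 0) :=
    fun t ht => ((hq t ht).continuousAt).continuousWithinAt
  by_cases hE : ∃ t0, 0 ≤ t0 ∧ q t0 = qstar
  · -- once q hits qstar it stays there: use g = (q - qstar)^2 antitone
    obtain ⟨t0, ht0, hq0⟩ := hE
    have hg : AntitoneOn (fun t => (q t - qstar)^2) (Set.Ici 0) := by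
      apply antiOn_of_deriv (d := fun t => 2 * (q t - qstar) * (α - F (q t)))
      · intro t ht
        have h := ((hq t ht).sub_const qstar).pow 2
        exact h.congr_deriv (by push_cast; ring)
      · intro t ht
        rcases lt_trichotomy (q t) qstar with h | h | h
        · have h1 : F (q t) ≤ α := hroot ▸ hFm h.le
          nlinarith
        · simp [h, hroot]
        · have h1 : α ≤ F (q t) := hroot ▸ hFm h.le
          nlinarith
    have hconst : ∀ t, t0 ≤ t → q t = qstar := by
      intro t ht
      have h1 := hg (Set.mem_Ici.2 ht0) (Set.mem_Ici.2 (ht0.trans ht)) ht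
      simp only [hq0, sub_self, ne_eq] at h1
      have h2 : (q t - qstar)^2 ≤ 0 := by simpa using h1
      nlinarith [sq_nonneg (q t - qstar)]
    refine Tendsto.congr' ?_ tendsto_const_nhds
    filter_upwards [eventually_ge_atTop t0] with t ht
    exact (hconst t ht).symm
  · push_neg at hE
    have hside : (∀ t, 0 ≤ t → qstar < q t) ∨ (∀ t, 0 ≤ t → q t < qstar) := by
      rcases lt_or_gt_of_ne (hE 0 le_rfl) with h | h
      · right
        intro t ht
        by_contra hc
        push_neg at hc
        have h1 : qstar < q t := lt_of_le_of_ne hc (Ne.symm (hE t ht))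
        have hsub : Set.uIcc 0 t ⊆ Set.Ici (0:ℝ) := by
          rw [Set.uIcc_of_le ht]
          exact Set.Icc_subset_Ici_self
        have hmem : qstar ∈ Set.uIcc (q 0) (q t) := Set.mem_uIcc.2 (Or.inl ⟨h.le, h1.le⟩)
        obtain ⟨u, hu, hqu⟩ := intermediate_value_uIcc (hqc.mono hsub) hmem
        exact hE u (hsub hu) hqu
      · left
        intro t ht
        by_contra hc
        push_neg at hc
        have h1 : q t < qstar := lt_of_le_of_ne hc (hE t ht)
        have hsub : Set.uIcc 0 t ⊆ Set.Ici (0:ℝ) := by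
          rw [Set.uIcc_of_le ht]
          exact Set.Icc_subset_Ici_self
        have hmem : qstar ∈ Set.uIcc (q 0) (q t) := Set.mem_uIcc.2 (Or.inr ⟨h1.le, h.le⟩)
        obtain ⟨u, hu, hqu⟩ := intermediate_value_uIcc (hqc.mono hsub) hmem
        exact hE u (hsub hu) hqu
    rcases hside with hpos | hneg
    · exact aux_above F hFm α qstar hroot huniq q hq hpos
    · -- reflect: apply aux_above to -q with G x = -F (-x)
      have key := aux_above (fun x => -F (-x)) (fun a b hab => by
          simpa using neg_le_neg (hFm (neg_le_neg hab)))
        (-α) (-qstar) (by simp [hroot])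
        (by
          intro x hx
          simp only [neg_eq_iff_eq_neg] at hx
          have : F (-x) = α := by linarith [hx]
          have := huniq (-x) this
          linarith)
        (fun t => -q t)
        (by
          intro t ht
          simp only [neg_neg]
          have h := (hq t ht).neg
          exact h.congr_deriv (by ring))
        (by intro t ht; simpa using (hneg t ht))
      have := key.neg
      simpa using this
end

section
/- Let (Ω, 𝓕, P) be a probability space with a filtration (𝓕_k)_{k∈ℕ}, let α ∈ (0,1), and let q⁻ ≤ q⁺ be real constants. Let (β_k) be positive reals with Σ_{k=0}^{∞} β_k² < ∞. Let (q_k) be real random variables with q_k 𝓕_k-measurable, let (H_k) be random variables with values in [0,1] with H_k 𝓕_k-measurable, and let (δ_k) be a martingale-difference sequence relative to (𝓕_k) (δ_k is 𝓕_{k+1}-measurable, E[δ_k | 𝓕_k] = 0 a.s.) with |δ_k| ≤ 2 almost surely. Suppose that for every k: q_{k+1} = q_k + β_k(α − H_k) + β_k δ_k, and almost surely H_k ≥ α on the event {q_k ≥ q⁺} and H_k ≤ α on the event {q_k ≤ q⁻}. Then sup_k |q_k| < ∞ almost surely. -/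
open MeasureTheory Filter

/-- Deterministic (pathwise) part of Lemma 3: if the noise partial sums are bounded
and the drift pushes the iterates towards `[qminus, qplus]`, then the iterates are bounded. -/
lemma stmt_6_aux (α qminus qplus : ℝ) (hα0 : 0 ≤ α) (hα1 : α ≤ 1)
    (β H δ q : ℕ → ℝ) (hβ0 : ∀ k, 0 ≤ β k) (B' : ℝ) (hβB : ∀ k, β k ≤ B')
    (hH0 : ∀ k, 0 ≤ H k) (hH1 : ∀ k, H k ≤ 1)
    (hrec : ∀ k, q (k + 1) = q k + β k * (α - H k) + β k * δ k)
    (hdrift : ∀ k, (qplus ≤ q k → α ≤ H k) ∧ (q k ≤ qminus → H k ≤ α))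
    (B : ℝ) (hM : ∀ n, |∑ k ∈ Finset.range n, β k * δ k| ≤ B) :
    ∃ C : ℝ, ∀ k, |q k| ≤ C := by
  set M : ℕ → ℝ := fun n => ∑ k ∈ Finset.range n, β k * δ k with hMdef
  have hrec' : ∀ n, q (n + 1) - M (n + 1) = (q n - M n) + β n * (α - H n) := by
    intro n
    simp only [hMdef, Finset.sum_range_succ, hrec n]
    ring
  have hstepub : ∀ k, β k * (α - H k) ≤ B' := by
    intro k
    nlinarith [hβ0 k, hβB k, hH0 k, hα1]
  have hsteplb : ∀ k, -B' ≤ β k * (α - H k) := by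
    intro k
    nlinarith [hβ0 k, hβB k, hH1 k, hα0]
  have hupper : ∀ n, q n - M n ≤ max (q 0) (qplus + B' + B) := by
    intro n
    induction n with
    | zero => simp [hMdef]
    | succ n ih =>
      rcases le_or_gt (q n) qplus with h | h
      · rw [hrec' n]
        refine le_trans ?_ (le_max_right _ _)
        have hMn := (abs_le.1 (hM n)).1
        have := hstepub n
        simp only [hMdef] at hMn ⊢
        linarith
      · have hd := (hdrift n).1 h.le
        have hnp : β n * (α - H n) ≤ 0 :=
          mul_nonpos_of_nonneg_of_nonpos (hβ0 n) (by linarith)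
        rw [hrec' n]
        linarith
  have hlower : ∀ n, min (q 0) (qminus - B' - B) ≤ q n - M n := by
    intro n
    induction n with
    | zero => simp [hMdef]
    | succ n ih =>
      rcases le_or_gt qminus (q n) with h | h
      · rw [hrec' n]
        refine le_trans (min_le_right _ _) ?_
        have hMn := (abs_le.1 (hM n)).2
        have := hsteplb n
        simp only [hMdef] at hMn ⊢
        linarith
      · have hd := (hdrift n).2 h.le
        have hnn : 0 ≤ β n * (α - H n) :=
          mul_nonneg (hβ0 n) (by linarith)
        rw [hrec' n]
        linarith
  refine ⟨max (max (q 0) (qplus + B' + B) + B) (-(min (q 0) (qminus - B' - B) - B)),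
    fun k => abs_le.2 ⟨?_, ?_⟩⟩
  · have h1 := hlower k
    have h2 := (abs_le.1 (hM k)).1
    have h3 := le_max_right (max (q 0) (qplus + B' + B) + B)
      (-(min (q 0) (qminus - B' - B) - B))
    linarith
  · have h1 := hupper k
    have h2 := (abs_le.1 (hM k)).2
    have h3 := le_max_left (max (q 0) (qplus + B' + B) + B)
      (-(min (q 0) (qminus - B' - B) - B))
    linarith

/-- Lemma 3 of the paper: almost-sure boundedness of the quantile-tracking recursion
`q_{k+1} = q_k + β_k (α − H_k) + β_k δ_k`, where `H_k ∈ [0,1]` is the conditional CDF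
evaluated at `q_k` (so `H_k ≥ α` when `q_k ≥ q⁺` and `H_k ≤ α` when `q_k ≤ q⁻`),
`δ` is a bounded martingale-difference noise, and `∑ β_k² < ∞`. -/
theorem stmt_6 {Ω : Type*} {m0 : MeasurableSpace Ω} (μ : Measure Ω) [IsProbabilityMeasure μ]
    (ℱ : Filtration ℕ m0) (α : ℝ) (hα : α ∈ Set.Ioo (0 : ℝ) 1)
    (qminus qplus : ℝ) (hqq : qminus ≤ qplus)
    (β : ℕ → ℝ) (hβpos : ∀ k, 0 < β k) (hβ : Summable fun k => (β k) ^ 2)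
    (q : ℕ → Ω → ℝ) (hqmeas : ∀ k, StronglyMeasurable[ℱ k] (q k))
    (H : ℕ → Ω → ℝ) (hHrange : ∀ k ω, H k ω ∈ Set.Icc (0 : ℝ) 1)
    (hHmeas : ∀ k, StronglyMeasurable[ℱ k] (H k))
    (δ : ℕ → Ω → ℝ) (hδmeas : ∀ k, StronglyMeasurable[ℱ (k + 1)] (δ k))
    (hδcond : ∀ k, μ[δ k | ℱ k] =ᵐ[μ] 0)
    (hδbdd : ∀ k, ∀ᵐ ω ∂μ, |δ k ω| ≤ 2)
    (hrec : ∀ k ω, q (k + 1) ω = q k ω + β k * (α - H k ω) + β k * δ k ω)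
    (hdrift : ∀ k, ∀ᵐ ω ∂μ,
      (qplus ≤ q k ω → α ≤ H k ω) ∧ (q k ω ≤ qminus → H k ω ≤ α)) :
    ∀ᵐ ω ∂μ, ∃ C : ℝ, ∀ k, |q k ω| ≤ C := by
  classical
  -- A generic integrability criterion for a.e.-bounded strongly measurable functions.
  have hbint : ∀ (f : Ω → ℝ) (c : ℝ), StronglyMeasurable f → (∀ᵐ ω ∂μ, |f ω| ≤ c) →
      Integrable f μ := by
    intro f c hf hc
    exact (memLp_top_of_bound hf.aestronglyMeasurable c
      (by filter_upwards [hc] with ω h using by simpa [Real.norm_eq_abs] using h)).integrable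
      le_top
  -- The noise martingale `M n = ∑_{k<n} β k δ k`.
  set M : ℕ → Ω → ℝ := fun n ω => ∑ k ∈ Finset.range n, β k * δ k ω with hMdef
  have hδsm : ∀ k, StronglyMeasurable (δ k) := fun k => (hδmeas k).mono (ℱ.le _)
  have hδint : ∀ k, Integrable (δ k) μ := fun k => hbint _ 2 (hδsm k) (hδbdd k)
  have hMadp : StronglyAdapted ℱ M := by
    intro n
    apply Finset.stronglyMeasurable_fun_sum
    intro k hk
    have hk' : k + 1 ≤ n := Finset.mem_range.1 hk
    exact ((hδmeas k).mono (ℱ.mono hk')).const_mul (β k)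
  have hMsm : ∀ n, StronglyMeasurable (M n) := fun n => (hMadp n).mono (ℱ.le n)
  have hMbd : ∀ n, ∀ᵐ ω ∂μ, |M n ω| ≤ 2 * ∑ k ∈ Finset.range n, β k := by
    intro n
    filter_upwards [ae_all_iff.2 hδbdd] with ω hω
    calc |M n ω| ≤ ∑ k ∈ Finset.range n, |β k * δ k ω| := Finset.abs_sum_le_sum_abs _ _
      _ ≤ ∑ k ∈ Finset.range n, β k * 2 := by
          refine Finset.sum_le_sum fun k _ => ?_
          rw [abs_mul, abs_of_nonneg (hβpos k).le]
          exact mul_le_mul_of_nonneg_left (hω k) (hβpos k).le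
      _ = 2 * ∑ k ∈ Finset.range n, β k := by rw [← Finset.sum_mul]; ring
  have hMint : ∀ n, Integrable (M n) μ := fun n => hbint _ _ (hMsm n) (hMbd n)
  -- `M` is a martingale.
  have hmart : Martingale M ℱ μ := by
    refine martingale_nat hMadp hMint fun n => ?_
    have h1 : μ[M (n + 1)|ℱ n] =ᵐ[μ] μ[M n|ℱ n] + μ[(β n) • δ n|ℱ n] := by
      have : M (n + 1) = M n + (β n) • δ n := by
        funext ω
        simp [hMdef, Finset.sum_range_succ, smul_eq_mul]
      rw [this]
      exact condExp_add (hMint n) ((hδint n).smul (β n)) _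
    have h2 : μ[M n|ℱ n] = M n := condExp_of_stronglyMeasurable (ℱ.le n) (hMadp n) (hMint n)
    have h3 : μ[(β n) • δ n|ℱ n] =ᵐ[μ] (0 : Ω → ℝ) := by
      refine (condExp_smul (β n) (δ n) _).trans ?_
      filter_upwards [hδcond n] with ω hω
      simp [hω]
    filter_upwards [h1, h3] with ω hω1 hω3
    simp only [Pi.add_apply] at hω1
    simp [hω1, hω3, h2]
  -- Second-moment bound via orthogonality of the increments.
  have hδ2int : ∀ k, Integrable (fun ω => δ k ω * δ k ω) μ := by
    intro k
    refine hbint _ 4 ((hδsm k).mul (hδsm k)) ?_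
    filter_upwards [hδbdd k] with ω hω
    rw [abs_mul]
    nlinarith [abs_nonneg (δ k ω)]
  have hMδint : ∀ n, Integrable (fun ω => M n ω * δ n ω) μ := by
    intro n
    refine hbint _ ((2 * ∑ k ∈ Finset.range n, β k) * 2) ((hMsm n).mul (hδsm n)) ?_
    filter_upwards [hMbd n, hδbdd n] with ω h1 h2
    rw [abs_mul]
    exact mul_le_mul h1 h2 (abs_nonneg _) (mul_nonneg (by norm_num) (Finset.sum_nonneg fun k _ => (hβpos k).le))
  have hM2int : ∀ n, Integrable (fun ω => (M n ω) ^ 2) μ := by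
    intro n
    refine hbint _ ((2 * ∑ k ∈ Finset.range n, β k) ^ 2) ?_ ?_
    · have := (hMsm n).mul (hMsm n)
      simpa [pow_two, Pi.mul_def] using this
    · filter_upwards [hMbd n] with ω hω
      rw [abs_pow] at *
      exact pow_le_pow_left₀ (abs_nonneg _) hω 2
  have hcross : ∀ n, ∫ ω, M n ω * δ n ω ∂μ = 0 := by
    intro n
    have h1 : ∫ ω, (μ[fun ω => M n ω * δ n ω|ℱ n]) ω ∂μ = ∫ ω, M n ω * δ n ω ∂μ :=
      integral_condExp (ℱ.le n)
    have h2 : μ[fun ω => M n ω * δ n ω|ℱ n] =ᵐ[μ] fun ω => M n ω * (μ[δ n|ℱ n]) ω := by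
      have := condExp_mul_of_stronglyMeasurable_left (hMadp n) (hMδint n) (hδint n)
      exact this
    have h3 : (fun ω => M n ω * (μ[δ n|ℱ n]) ω) =ᵐ[μ] (0 : Ω → ℝ) := by
      filter_upwards [hδcond n] with ω hω
      simp [hω]
    rw [← h1, integral_congr_ae (h2.trans h3)]
    simp
  have hδ2bd : ∀ n, ∫ ω, δ n ω * δ n ω ∂μ ≤ 4 := by
    intro n
    calc ∫ ω, δ n ω * δ n ω ∂μ ≤ ∫ _ω, (4 : ℝ) ∂μ := by
          refine integral_mono_ae (hδ2int n) (integrable_const 4) ?_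
          filter_upwards [hδbdd n] with ω hω
          nlinarith [abs_nonneg (δ n ω), sq_abs (δ n ω)]
      _ = 4 := by simp
  have hL2 : ∀ n, ∫ ω, (M n ω) ^ 2 ∂μ ≤ 4 * ∑ k ∈ Finset.range n, (β k) ^ 2 := by
    intro n
    induction n with
    | zero => simp [hMdef]
    | succ n ih =>
      have hexp : ∀ ω, (M (n + 1) ω) ^ 2 =
          (M n ω) ^ 2 + ((2 * β n) * (M n ω * δ n ω) + (β n) ^ 2 * (δ n ω * δ n ω)) := by
        intro ω
        simp only [hMdef, Finset.sum_range_succ]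
        ring
      have hint2 : Integrable (fun ω => (2 * β n) * (M n ω * δ n ω)
          + (β n) ^ 2 * (δ n ω * δ n ω)) μ :=
        ((hMδint n).const_mul _).add ((hδ2int n).const_mul _)
      calc ∫ ω, (M (n + 1) ω) ^ 2 ∂μ
          = ∫ ω, ((M n ω) ^ 2 + ((2 * β n) * (M n ω * δ n ω)
              + (β n) ^ 2 * (δ n ω * δ n ω))) ∂μ := by
            exact integral_congr_ae (Eventually.of_forall hexp)
        _ = (∫ ω, (M n ω) ^ 2 ∂μ) + ((2 * β n) * ∫ ω, M n ω * δ n ω ∂μ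
              + (β n) ^ 2 * ∫ ω, δ n ω * δ n ω ∂μ) := by
            rw [integral_add (hM2int n) hint2, integral_add ((hMδint n).const_mul _)
              ((hδ2int n).const_mul _), integral_const_mul, integral_const_mul]
        _ ≤ 4 * ∑ k ∈ Finset.range n, (β k) ^ 2 + (0 + (β n) ^ 2 * 4) := by
            rw [hcross n]
            have := mul_le_mul_of_nonneg_left (hδ2bd n) (sq_nonneg (β n))
            gcongr
            · exact le_of_eq (by ring)
        _ = 4 * ∑ k ∈ Finset.range (n + 1), (β k) ^ 2 := by
            rw [Finset.sum_range_succ]; ring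
  set S : ℝ := ∑' k, (β k) ^ 2 with hSdef
  have hSnn : 0 ≤ S := tsum_nonneg fun k => sq_nonneg _
  have hL2' : ∀ n, ∫ ω, (M n ω) ^ 2 ∂μ ≤ 4 * S := by
    intro n
    refine (hL2 n).trans ?_
    have := Summable.sum_le_tsum (Finset.range n) (fun k _ => sq_nonneg (β k)) hβ
    linarith
  -- L¹ bound (using `|x| ≤ 1 + x²`) and a.s. convergence of `M`.
  have hL1 : ∀ n, ∫ ω, |M n ω| ∂μ ≤ 1 + 4 * S := by
    intro n
    calc ∫ ω, |M n ω| ∂μ ≤ ∫ ω, (1 + (M n ω) ^ 2) ∂μ := by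
          refine integral_mono (hMint n).abs ((integrable_const 1).add (hM2int n)) fun ω => ?_
          nlinarith [sq_abs (M n ω), abs_nonneg (M n ω), sq_nonneg (|M n ω| - 1)]
      _ = 1 + ∫ ω, (M n ω) ^ 2 ∂μ := by
          rw [integral_add (integrable_const 1) (hM2int n)]; simp
      _ ≤ 1 + 4 * S := by linarith [hL2' n]
  have hbdd : ∀ n, eLpNorm (M n) 1 μ ≤ ((1 + 4 * S).toNNReal : ENNReal) := by
    intro n
    rw [eLpNorm_one_eq_lintegral_enorm, ← ofReal_integral_norm_eq_lintegral_enorm (hMint n)]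
    exact ENNReal.ofReal_le_ofReal (by simpa [Real.norm_eq_abs] using hL1 n)
  have htend := hmart.submartingale.ae_tendsto_limitProcess hbdd
  -- The pathwise bound `β k ≤ 1 + S`.
  have hβB : ∀ k, β k ≤ 1 + S := by
    intro k
    have h1 : (β k) ^ 2 ≤ S := hβ.le_tsum k fun j _ => sq_nonneg _
    nlinarith [sq_nonneg (β k - 1)]
  -- Conclude pathwise.
  filter_upwards [htend, ae_all_iff.2 hdrift] with ω hMω hdω
  obtain ⟨B, hB⟩ := (hMω.abs).bddAbove_range
  have hBn : ∀ n, |M n ω| ≤ B := fun n => hB (Set.mem_range_self n)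
  exact stmt_6_aux α qminus qplus hα.1.le hα.2.le β (fun k => H k ω) (fun k => δ k ω)
    (fun k => q k ω) (fun k => (hβpos k).le) (1 + S) hβB
    (fun k => (hHrange k ω).1) (fun k => (hHrange k ω).2)
    (fun k => hrec k ω) hdω B hBn
end
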